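/- arXiv:0804.2906 — 3 statements merged into one kernel-verified Lean document; each statement's English description precedes it below -/
import Mathlib

section
/- A compact operator on a Hilbert space that commutes with a self-adjoint bounded operator having no eigenvectors (i.e. a diffuse operator) must be zero. -/
open ContinuousLinearMap Metric Filter Topology

/-- A nonzero compact operator `T` yields a nonzero eigenvalue `‖T‖²` for `T† ∘L T`. -/
lemma adjoint_comp_self_has_top_eigenvector
    {H : Type*} [NormedAddCommGroup H] [InnerProductSpace ℂ H] [CompleteSpace H]
    (T : H →L[ℂ] H) (hT : IsCompactOperator T) (hTne : T ≠ 0) :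
    ∃ x : H, x ≠ 0 ∧
      (ContinuousLinearMap.adjoint T ∘L T) x = ((‖T‖ ^ 2 : ℝ) : ℂ) • x := by
  set T' := ContinuousLinearMap.adjoint T with hT'def
  set B : H →L[ℂ] H := T' ∘L T with hBdef
  set M : ℝ := ‖B‖ with hMdef
  have hMT : M = ‖T‖ * ‖T‖ := ContinuousLinearMap.norm_adjoint_comp_self T
  have hTpos : 0 < ‖T‖ := norm_pos_iff.mpr hTne
  have hM : 0 < M := by rw [hMT]; positivity
  -- basic inner product facts
  have hre : ∀ v : H, Complex.re (inner ℂ (B v) v : ℂ) = ‖T v‖ ^ 2 := by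
    intro v
    have h1 : (inner ℂ (B v) v : ℂ) = inner ℂ (T v) (T v) := by
      show (inner ℂ (T' (T v)) v : ℂ) = inner ℂ (T v) (T v)
      rw [hT'def, ContinuousLinearMap.adjoint_inner_left]
    rw [h1]
    simpa using inner_self_eq_norm_sq (𝕜 := ℂ) (T v)
  have hkey : ∀ v : H, ‖B v‖ ^ 2 ≤ M * ‖T v‖ ^ 2 := by
    intro v
    have h1 : (‖B v‖ : ℝ) ^ 2 = Complex.re (inner ℂ (B v) (B v) : ℂ) :=
      (inner_self_eq_norm_sq (𝕜 := ℂ) (B v)).symm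
    have h2 : (inner ℂ (B v) (B v) : ℂ) = inner ℂ (T v) (T (B v)) := by
      show (inner ℂ (T' (T v)) (B v) : ℂ) = inner ℂ (T v) (T (B v))
      rw [hT'def, ContinuousLinearMap.adjoint_inner_left]
    have h3 : Complex.re (inner ℂ (T v) (T (B v)) : ℂ) ≤ ‖T v‖ * ‖T (B v)‖ := by
      refine le_trans ?_ (norm_inner_le_norm (𝕜 := ℂ) (T v) (T (B v)))
      exact Complex.re_le_norm _
    have h4 : ‖T (B v)‖ ≤ ‖T‖ * ‖B v‖ := T.le_opNorm _
    have h5 : ‖B v‖ ≤ ‖T‖ * ‖T v‖ := by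
      calc ‖B v‖ = ‖T' (T v)‖ := rfl
        _ ≤ ‖T'‖ * ‖T v‖ := T'.le_opNorm _
        _ = ‖T‖ * ‖T v‖ := by rw [hT'def, LinearIsometryEquiv.norm_map]
    have hTv : (0:ℝ) ≤ ‖T v‖ := norm_nonneg _
    have hBv : (0:ℝ) ≤ ‖B v‖ := norm_nonneg _
    have hTn : (0:ℝ) ≤ ‖T‖ := norm_nonneg _
    rw [h1, h2]
    nlinarith [mul_le_mul_of_nonneg_left h4 hTv, mul_le_mul_of_nonneg_right h5 hTn]
  -- maximizing sequence
  have hseq : ∀ n : ℕ, ∃ v : H, ‖v‖ ≤ 1 ∧ M - 1 / (n + 1) < ‖B v‖ := by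
    intro n
    have hlt : M - 1 / (n + 1 : ℝ) < ‖B‖ := by
      have : (0:ℝ) < 1 / (n + 1) := by positivity
      rw [← hMdef]; linarith
    obtain ⟨v, hv1, hv2⟩ := B.exists_lt_apply_of_lt_opNorm hlt
    exact ⟨v, hv1.le, hv2⟩
  choose x hx1 hx2 using hseq
  -- the key estimate : ‖B xₙ - M xₙ‖² ≤ 2M/(n+1)
  have hest : ∀ n : ℕ, ‖B (x n) - ((M:ℝ):ℂ) • x n‖ ^ 2 ≤ 2 * M * (1 / (n + 1)) := by
    intro n
    have hns : ‖B (x n) - ((M:ℝ):ℂ) • x n‖ ^ 2 =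
        ‖B (x n)‖ ^ 2 - 2 * (M * Complex.re (inner ℂ (B (x n)) (x n) : ℂ)) +
          ‖((M:ℝ):ℂ) • x n‖ ^ 2 := by
      rw [@norm_sub_sq ℂ]
      congr 2
      rw [inner_smul_right]
      simp [Complex.re_ofReal_mul]
    have hsm : ‖((M:ℝ):ℂ) • x n‖ ^ 2 = M ^ 2 * ‖x n‖ ^ 2 := by
      rw [norm_smul]
      simp [Complex.norm_real, abs_of_pos hM, mul_pow]
    have hxle : ‖x n‖ ^ 2 ≤ 1 := by
      have := hx1 n
      nlinarith [norm_nonneg (x n)]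
    have hBle : ‖B (x n)‖ ≤ M := B.unit_le_opNorm _ (hx1 n)
    have hTle : ‖T (x n)‖ ^ 2 ≤ M := by
      have h1 : ‖T (x n)‖ ≤ ‖T‖ := T.unit_le_opNorm _ (hx1 n)
      rw [hMT]; nlinarith [norm_nonneg (T (x n))]
    have hk := hkey (x n)
    have hb := hx2 n
    have hr := hre (x n)
    have hε : (0:ℝ) < 1 / (n + 1) := by positivity
    rw [hns, hr, hsm]
    nlinarith [norm_nonneg (B (x n)),
      mul_nonneg (sub_pos.mpr hb).le (add_nonneg (norm_nonneg (B (x n))) hM.le),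
      mul_nonneg hε.le (sub_nonneg.mpr hBle)]
  -- the difference tends to zero
  have hd0 : Tendsto (fun n => B (x n) - ((M:ℝ):ℂ) • x n) atTop (𝓝 0) := by
    rw [tendsto_zero_iff_norm_tendsto_zero]
    have hsq : Tendsto (fun n : ℕ => ‖B (x n) - ((M:ℝ):ℂ) • x n‖ ^ 2) atTop (𝓝 0) := by
      apply squeeze_zero (fun n => by positivity) hest
      have h1 : Tendsto (fun n : ℕ => (1 : ℝ) / (n + 1)) atTop (𝓝 0) :=
        tendsto_one_div_add_atTop_nhds_zero_nat
      have := h1.const_mul (2 * M)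
      simpa using this
    have h2 := (Real.continuous_sqrt.tendsto 0).comp hsq
    simpa [Function.comp_def, Real.sqrt_sq (norm_nonneg _)] using h2
  -- compactness : extract a convergent subsequence of B xₙ
  have hBc : IsCompactOperator (⇑B) := by
    have := hT.clm_comp T'
    exact this
  obtain ⟨K, hKcomp, hKsub⟩ :=
    IsCompactOperator.image_subset_compact_of_bounded (𝕜₁ := ℂ)
      (f := (B : H →ₗ[ℂ] H)) hBc (Metric.isBounded_closedBall (x := (0:H)) (r := 1))
  have hmemK : ∀ n, B (x n) ∈ K := fun n =>
    hKsub ⟨x n, by simpa [mem_closedBall_zero_iff] using hx1 n, rfl⟩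
  obtain ⟨y, _, φ, hφmono, hφtend⟩ := hKcomp.tendsto_subseq hmemK
  -- the subsequence xᵩₙ converges to x₀ := M⁻¹ y
  have hc0 : ((M:ℝ):ℂ) ≠ 0 := by
    simpa using hM.ne'
  have hsub0 : Tendsto (fun n => B (x (φ n)) - ((M:ℝ):ℂ) • x (φ n)) atTop (𝓝 0) :=
    hd0.comp hφmono.tendsto_atTop
  have hMx : Tendsto (fun n => ((M:ℝ):ℂ) • x (φ n)) atTop (𝓝 y) := by
    have := hφtend.sub hsub0
    simpa using this
  set x₀ : H := ((M:ℝ):ℂ)⁻¹ • y with hx₀def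
  have hx₀tend : Tendsto (fun n => x (φ n)) atTop (𝓝 x₀) := by
    have h := hMx.const_smul (((M:ℝ):ℂ)⁻¹)
    have heq : ∀ n, (((M:ℝ):ℂ))⁻¹ • (((M:ℝ):ℂ) • x (φ n)) = x (φ n) := fun n =>
      inv_smul_smul₀ hc0 _
    rw [tendsto_congr heq] at h
    exact h
  have hBx₀ : B x₀ = y := by
    have h1 : Tendsto (fun n => B (x (φ n))) atTop (𝓝 (B x₀)) :=
      (B.continuous.tendsto x₀).comp hx₀tend
    exact tendsto_nhds_unique h1 hφtend
  -- y ≠ 0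
  have hylb : M ≤ ‖y‖ := by
    have h1 : Tendsto (fun n : ℕ => M - 1 / (n + 1 : ℝ)) atTop (𝓝 M) := by
      have := tendsto_const_nhds (x := M) (f := atTop (α := ℕ)) |>.sub
        tendsto_one_div_add_atTop_nhds_zero_nat
      simpa using this
    have h2 : Tendsto (fun n => ‖B (x (φ n))‖) atTop (𝓝 ‖y‖) :=
      (continuous_norm.tendsto y).comp hφtend
    refine le_of_tendsto_of_tendsto' h1 h2 fun n => ?_
    have h3 : (1 : ℝ) / (φ n + 1) ≤ 1 / (n + 1) := by
      apply one_div_le_one_div_of_le (by positivity)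
      have h4 : n ≤ φ n := hφmono.le_apply
      exact_mod_cast add_le_add_left (Nat.cast_le.mpr h4) (1:ℝ)
    have := hx2 (φ n)
    linarith
  have hyne : y ≠ 0 := by
    intro h
    rw [h, norm_zero] at hylb
    linarith
  have hx₀ne : x₀ ≠ 0 := smul_ne_zero (inv_ne_zero hc0) hyne
  have hx₀eig : B x₀ = ((M:ℝ):ℂ) • x₀ := by
    rw [hBx₀, hx₀def, smul_inv_smul₀ hc0]
  refine ⟨x₀, hx₀ne, ?_⟩
  have hMeq : ((‖T‖ ^ 2 : ℝ) : ℂ) = ((M:ℝ):ℂ) := by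
    norm_cast
    rw [hMT, sq]
  rw [hMeq]
  exact hx₀eig

/-- A compact operator on a complex Hilbert space that commutes with a bounded
self-adjoint operator having no eigenvectors (a "diffuse" operator) must be zero. -/
theorem compact_commuting_with_diffuse_is_zero
    {H : Type*} [NormedAddCommGroup H] [InnerProductSpace ℂ H] [CompleteSpace H]
    (T A : H →L[ℂ] H)
    (hT : IsCompactOperator T)
    (hA : IsSelfAdjoint A)
    (hdiffuse : ∀ (lam : ℂ) (x : H), A x = lam • x → x = 0)
    (hcomm : T ∘L A = A ∘L T) :
    T = 0 := by
  by_contra hTne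
  obtain ⟨x₀, hx₀ne, hx₀eig⟩ := adjoint_comp_self_has_top_eigenvector T hT hTne
  set T' := ContinuousLinearMap.adjoint T with hT'def
  set B : H →L[ℂ] H := T' ∘L T with hBdef
  set c : ℂ := ((‖T‖ ^ 2 : ℝ) : ℂ) with hcdef
  have hTpos : 0 < ‖T‖ := norm_pos_iff.mpr hTne
  have hcne : c ≠ 0 := by
    simp only [hcdef, ne_eq, Complex.ofReal_eq_zero]
    positivity
  -- commutation of B with A
  have hcommfun : ∀ v : H, T (A v) = A (T v) := fun v =>
    congrArg (fun f => f v) hcomm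
  have hcommT' : ∀ v : H, T' (A v) = A (T' v) := by
    have h1 := congrArg ContinuousLinearMap.adjoint hcomm
    rw [ContinuousLinearMap.adjoint_comp, ContinuousLinearMap.adjoint_comp,
      hA.adjoint_eq] at h1
    intro v
    exact (congrArg (fun f => f v) h1).symm
  have hBA : ∀ v : H, B (A v) = A (B v) := by
    intro v
    show T' (T (A v)) = A (T' (T v))
    rw [hcommfun, hcommT']
  -- the eigenspace
  set E : Submodule ℂ H := LinearMap.ker ((B - c • ContinuousLinearMap.id ℂ H : H →L[ℂ] H) : H →ₗ[ℂ] H) with hEdef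
  have hEmem : ∀ v : H, v ∈ E ↔ B v = c • v := by
    intro v
    simp [hEdef, LinearMap.mem_ker, ContinuousLinearMap.sub_apply,
      ContinuousLinearMap.smul_apply, ContinuousLinearMap.id_apply, sub_eq_zero]
  have hx₀E : x₀ ∈ E := (hEmem x₀).mpr hx₀eig
  have hEclosed : IsClosed (E : Set H) :=
    ContinuousLinearMap.isClosed_ker (B - c • ContinuousLinearMap.id ℂ H)
  -- finite-dimensionality of the eigenspace via compactness
  have hBc : IsCompactOperator (⇑B) := by
    have := hT.clm_comp T'
    exact this
  obtain ⟨K, hKcomp, hKsub⟩ :=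
    IsCompactOperator.image_subset_compact_of_bounded (𝕜₁ := ℂ)
      (f := (B : H →ₗ[ℂ] H)) hBc (Metric.isBounded_closedBall (x := (0:H)) (r := 1))
  have hScomp : IsCompact ((E : Set H) ∩ Metric.closedBall 0 1) := by
    refine IsCompact.of_isClosed_subset (hKcomp.smul c⁻¹)
      (hEclosed.inter Metric.isClosed_closedBall) ?_
    rintro v ⟨hvE, hvb⟩
    have h1 : B v = c • v := (hEmem v).mp hvE
    have h2 : B v ∈ K := hKsub ⟨v, hvb, rfl⟩
    refine ⟨B v, h2, ?_⟩
    show c⁻¹ • B v = v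
    rw [h1, inv_smul_smul₀ hcne]
  have hEball : IsCompact (Metric.closedBall (0 : E) 1) := by
    rw [Subtype.isCompact_iff]
    convert hScomp using 1
    ext v
    constructor
    · rintro ⟨⟨w, hw⟩, hwball, rfl⟩
      refine ⟨hw, ?_⟩
      simpa [mem_closedBall_zero_iff] using hwball
    · rintro ⟨hvE, hvb⟩
      refine ⟨⟨v, hvE⟩, ?_, rfl⟩
      simpa [mem_closedBall_zero_iff] using hvb
  have hEfin : FiniteDimensional ℂ E :=
    FiniteDimensional.of_isCompact_closedBall₀ ℂ one_pos hEball
  have hEnontriv : Nontrivial E := by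
    refine nontrivial_of_ne ⟨x₀, hx₀E⟩ 0 ?_
    simp [Submodule.mk_eq_zero, hx₀ne]
  -- A preserves E
  have hinv : ∀ v ∈ E, A v ∈ E := by
    intro v hv
    rw [hEmem] at hv ⊢
    rw [hBA, hv, map_smul]
  -- restrict A to E and find an eigenvector
  set g : E →ₗ[ℂ] E := (A : H →ₗ[ℂ] H).restrict hinv with hgdef
  obtain ⟨μ, hμ⟩ := Module.End.exists_eigenvalue g
  obtain ⟨v, hv⟩ := hμ.exists_hasEigenvector
  have hgv : g v = μ • v := hv.apply_eq_smul
  have hAv : A (v : H) = μ • (v : H) := by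
    have h1 : ((g v : E) : H) = A (v : H) := rfl
    rw [← h1, hgv, Submodule.coe_smul]
  have : (v : H) = 0 := hdiffuse μ (v : H) hAv
  exact hv.2 (by exact_mod_cast this)
end

section
/- Peterson's trick for derivations: if δ is a derivation on an algebra containing X with δ(X) = 1⊗1 (into the bimodule M⊗M with actions a·(x⊗y)·b = ax⊗yb), and Z satisfies δ(Z) = 0 and [Z, X] = 0, then [Z, 1⊗1] = Z⊗1 − 1⊗Z = 0; consequently if additionally (τ⊗τ)-norms are faithful, Z = τ(Z)·1. -/
open TensorProduct

/-- Peterson's trick for derivations: if `δ` is a derivation into the `M`–`M`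
bimodule `M ⊗ M` (with actions `a·(x⊗y)·b = ax ⊗ yb`) with `δ(X) = 1⊗1`, and `Z`
satisfies `δ(Z) = 0` and `[Z,X] = 0`, then `Z⊗1 − 1⊗Z = 0`; consequently, if the
trace `τ` is faithful, `Z = τ(Z)·1`. -/
theorem peterson_trick
    {M : Type*} [Ring M] [StarRing M] [Algebra ℂ M] [StarModule ℂ M]
    (τ : M →ₗ[ℂ] ℂ)
    (hτ1 : τ 1 = 1)
    (htrace : ∀ x y : M, τ (x * y) = τ (y * x))
    (hstar : ∀ x : M, τ (star x) = starRingEnd ℂ (τ x))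
    (hfaithful : ∀ x : M, τ (star x * x) = 0 → x = 0)
    (δ : M →ₗ[ℂ] M ⊗[ℂ] M)
    (hLeib : ∀ a b : M, δ (a * b) = δ a * (1 ⊗ₜ[ℂ] b) + (a ⊗ₜ[ℂ] 1) * δ b)
    (X Z : M)
    (hX : δ X = 1 ⊗ₜ[ℂ] 1)
    (hZ : δ Z = 0)
    (hcomm : Z * X = X * Z) :
    Z ⊗ₜ[ℂ] 1 - 1 ⊗ₜ[ℂ] Z = 0 ∧ Z = τ Z • 1 := by
  have h1 : δ (Z * X) = Z ⊗ₜ[ℂ] 1 := by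
    rw [hLeib, hZ, hX]
    simp [Algebra.TensorProduct.tmul_mul_tmul]
  have h2 : δ (X * Z) = 1 ⊗ₜ[ℂ] Z := by
    rw [hLeib, hZ, hX]
    simp [Algebra.TensorProduct.tmul_mul_tmul]
  have key : Z ⊗ₜ[ℂ] 1 - 1 ⊗ₜ[ℂ] Z = 0 := by
    rw [← h1, ← h2, hcomm, sub_self]
  refine ⟨key, ?_⟩
  let f : M ⊗[ℂ] M →ₗ[ℂ] M :=
    TensorProduct.lift (LinearMap.mk₂ ℂ (fun x y => τ y • x)
      (fun a b y => by rw [smul_add]) (fun c a y => smul_comm (τ y) c a)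
      (fun x a b => by rw [map_add, add_smul])
      (fun c x y => by rw [map_smul, smul_eq_mul, mul_smul]))
  have := congrArg f key
  simp only [map_sub, map_zero, f, TensorProduct.lift.tmul, LinearMap.mk₂_apply, hτ1,
    one_smul, sub_eq_zero] at this
  exact this
end

section
/- Norm-resolvent continuity estimate used in the Kaplansky-type argument: for elements X, X_n of a tracial von Neumann algebra with ‖X_n − X‖₂ → 0 and with all auxiliary factors uniformly bounded in operator norm by functional calculus, one has ‖X_n(1+X_n*X_n)^{-1}X_n* − X(1+X*X)^{-1}X*‖₂ → 0. -/
open Filter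

section CStarBounds
variable {A : Type*} [CStarAlgebra A]

namespace KapAux

lemma sp_nonneg (a : A) : ∀ x ∈ spectrum ℝ (star a * a), 0 ≤ x :=
  spectrum_star_mul_self_nonneg

noncomputable def u (a : A) : A := cfc (fun t : ℝ => (1 + t)⁻¹) (star a * a)

lemma contOn (a : A) : ContinuousOn (fun t : ℝ => (1 + t)⁻¹) (spectrum ℝ (star a * a)) := by
  apply ContinuousOn.inv₀ (by fun_prop)
  intro x hx
  have := sp_nonneg a x hx
  positivity

lemma one_add_eq (a : A) : (1 : A) + star a * a = cfc (fun t : ℝ => 1 + t) (star a * a) := by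
  rw [cfc_add (star a * a) _ _ (by fun_prop) (by fun_prop), cfc_const_one ℝ (star a * a),
    cfc_id' ℝ (star a * a)]

lemma mul_u (a : A) : ((1 : A) + star a * a) * u a = 1 := by
  rw [one_add_eq, u, ← cfc_mul _ _ _ (by fun_prop) (contOn a)]
  rw [cfc_congr (g := fun _ : ℝ => 1) fun x hx => ?_]
  · exact cfc_const_one ℝ (star a * a)
  · have := sp_nonneg a x hx
    have h1 : (1 : ℝ) + x ≠ 0 := by positivity
    simp [mul_inv_cancel₀ h1]

lemma u_mul (a : A) : u a * ((1 : A) + star a * a) = 1 := by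
  rw [one_add_eq, u, ← cfc_mul _ _ _ (contOn a) (by fun_prop)]
  rw [cfc_congr (g := fun _ : ℝ => 1) fun x hx => ?_]
  · exact cfc_const_one ℝ (star a * a)
  · have := sp_nonneg a x hx
    have h1 : (1 : ℝ) + x ≠ 0 := by positivity
    simp [inv_mul_cancel₀ h1]

lemma isUnit_one_add (a : A) : IsUnit ((1 : A) + star a * a) :=
  ⟨⟨_, u a, mul_u a, u_mul a⟩, rfl⟩

lemma ringInverse_eq (a : A) : Ring.inverse ((1 : A) + star a * a) = u a := by
  exact Ring.inverse_unit ⟨_, u a, mul_u a, u_mul a⟩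

lemma u_selfAdjoint (a : A) : IsSelfAdjoint (u a) := cfc_predicate _ _

lemma norm_u_le (a : A) : ‖u a‖ ≤ 1 := by
  apply norm_cfc_le zero_le_one
  intro x hx
  have := sp_nonneg a x hx
  rw [Real.norm_eq_abs, abs_of_nonneg (by positivity)]
  rw [inv_le_one_iff₀]
  right; linarith

end KapAux
end CStarBounds

section More
variable {A : Type*} [CStarAlgebra A]
namespace KapAux

lemma conj_cfc (a : A) (f : ℝ → ℝ)
    (hf : ContinuousOn f (spectrum ℝ (star a * a))) :
    cfc f (star a * a) * (star a * a) * cfc f (star a * a)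
      = cfc (fun t => f t * t * f t) (star a * a) := by
  nth_rewrite 2 [← cfc_id' ℝ (star a * a)]
  rw [← cfc_mul _ _ _ hf (by fun_prop), ← cfc_mul _ _ _ (by exact hf.mul (by fun_prop)) hf]

lemma sq_le_one {x : ℝ} (h0 : 0 ≤ x) (h : x * x ≤ 1) : x ≤ 1 := by nlinarith

lemma norm_mul_u_le (a : A) : ‖a * u a‖ ≤ 1 := by
  apply sq_le_one (norm_nonneg _)
  rw [← CStarRing.norm_star_mul_self]
  have hst : star (a * u a) = u a * star a := by
    rw [star_mul, (u_selfAdjoint a).star_eq]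
  rw [hst, show u a * star a * (a * u a) = u a * (star a * a) * u a by noncomm_ring, u,
    conj_cfc a _ (contOn a)]
  apply norm_cfc_le zero_le_one
  intro x hx
  have hx0 := sp_nonneg a x hx
  rw [Real.norm_eq_abs, abs_of_nonneg (by positivity)]
  rw [show (1+x)⁻¹ * x * (1+x)⁻¹ = x / ((1+x)*(1+x)) by field_simp]
  rw [div_le_one (by positivity)]
  nlinarith

lemma norm_u_star_le (a : A) : ‖u a * star a‖ ≤ 1 := by
  have hst : star (a * u a) = u a * star a := by
    rw [star_mul, (u_selfAdjoint a).star_eq]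
  rw [← hst, norm_star]
  exact norm_mul_u_le a

noncomputable def v (a : A) : A := cfc (fun t : ℝ => Real.sqrt (1 + t)⁻¹) (star a * a)

lemma contOnv (a : A) : ContinuousOn (fun t : ℝ => Real.sqrt (1 + t)⁻¹)
    (spectrum ℝ (star a * a)) :=
  Real.continuous_sqrt.comp_continuousOn (contOn a)

lemma v_selfAdjoint (a : A) : IsSelfAdjoint (v a) := cfc_predicate _ _

lemma v_mul_v (a : A) : v a * v a = u a := by
  rw [v, ← cfc_mul _ _ _ (contOnv a) (contOnv a), u]
  apply cfc_congr
  intro x hx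
  have hx0 := sp_nonneg a x hx
  exact Real.mul_self_sqrt (by positivity)

lemma norm_ava_le (a : A) : ‖a * u a * star a‖ ≤ 1 := by
  have hst : star (a * v a) = v a * star a := by
    rw [star_mul, (v_selfAdjoint a).star_eq]
  have key : a * u a * star a = (a * v a) * star (a * v a) := by
    rw [hst, ← v_mul_v a]; noncomm_ring
  rw [key, CStarRing.norm_self_mul_star]
  have h2 : ‖a * v a‖ * ‖a * v a‖ ≤ 1 := by
    rw [← CStarRing.norm_star_mul_self, hst,
      show v a * star a * (a * v a) = v a * (star a * a) * v a by noncomm_ring, v,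
      conj_cfc a _ (contOnv a)]
    apply norm_cfc_le zero_le_one
    intro x hx
    have hx0 := sp_nonneg a x hx
    have hs : Real.sqrt (1+x)⁻¹ * x * Real.sqrt (1+x)⁻¹ = x * (1+x)⁻¹ := by
      rw [show Real.sqrt (1+x)⁻¹ * x * Real.sqrt (1+x)⁻¹
          = (Real.sqrt (1+x)⁻¹ * Real.sqrt (1+x)⁻¹) * x by ring,
        Real.mul_self_sqrt (by positivity), mul_comm]
    rw [Real.norm_eq_abs, hs, abs_of_nonneg (by positivity), ← div_eq_mul_inv,
      div_le_one (by positivity)]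
    linarith
  exact h2

end KapAux
end More

section Trace
variable {M : Type*} [NormedRing M] [StarRing M] [CStarRing M] [CompleteSpace M]
    [NormedAlgebra ℂ M] [StarModule ℂ M]
variable (τ : M →ₗ[ℂ] ℂ)
    (htrace : ∀ x y : M, τ (x * y) = τ (y * x))
    (hstar : ∀ x : M, τ (star x) = starRingEnd ℂ (τ x))
    (hpos : ∀ a : M, 0 ≤ (τ (star a * a)).re ∧ (τ (star a * a)).im = 0)
    (n2 : M → ℝ) (hn2 : ∀ a, n2 a = Real.sqrt (τ (star a * a)).re)

namespace KapAux
include hn2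

lemma n2_nonneg (a : M) : 0 ≤ n2 a := by rw [hn2]; exact Real.sqrt_nonneg _

include hpos in
lemma n2_sq (a : M) : n2 a ^ 2 = (τ (star a * a)).re := by
  rw [hn2, Real.sq_sqrt (hpos a).1]

include htrace in
lemma n2_star (a : M) : n2 (star a) = n2 a := by
  rw [hn2, hn2, star_star, htrace]

include htrace in
lemma n2_neg (a : M) : n2 (-a) = n2 a := by
  rw [hn2, hn2, star_neg, neg_mul_neg]

include htrace hstar hpos in
lemma re_inner_le (a b : M) : (τ (star a * b)).re ≤ n2 a * n2 b := by
  have hconj : (τ (star b * a)).re = (τ (star a * b)).re := by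
    have := hstar (star a * b)
    rw [star_mul, star_star] at this
    rw [this, Complex.conj_re]
  have hq : ∀ t : ℝ, 0 ≤ (n2 b)^2 * (t * t) + (2 * (τ (star a * b)).re) * t + (n2 a)^2 := by
    intro t
    have hexp : star (a + (t:ℂ) • b) * (a + (t:ℂ) • b)
        = star a * a + (t:ℂ) • (star a * b) + (t:ℂ) • (star b * a)
          + ((t * t : ℝ):ℂ) • (star b * b) := by
      rw [star_add, star_smul]
      simp only [Complex.star_def, Complex.conj_ofReal]
      push_cast
      rw [add_mul, mul_add, mul_add, smul_mul_assoc, smul_mul_assoc, mul_smul_comm,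
        mul_smul_comm, smul_smul]
      abel
    have hp := (hpos (a + (t:ℂ) • b)).1
    rw [hexp] at hp
    simp only [map_add, map_smul, smul_eq_mul, Complex.add_re, Complex.re_ofReal_mul] at hp
    rw [n2_sq τ hpos n2 hn2 a, n2_sq τ hpos n2 hn2 b, hconj] at *
    ring_nf at hp ⊢
    linarith
  have hd := discrim_le_zero hq
  rw [discrim] at hd
  have h1 := n2_nonneg τ n2 hn2 a
  have h2 := n2_nonneg τ n2 hn2 b
  nlinarith [hd, mul_nonneg h1 h2, sq_nonneg (n2 a * n2 b - (τ (star a * b)).re),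
    sq_nonneg (n2 a * n2 b + (τ (star a * b)).re)]

include htrace hstar hpos in
lemma n2_add_le (a b : M) : n2 (a + b) ≤ n2 a + n2 b := by
  have hconj : (τ (star b * a)).re = (τ (star a * b)).re := by
    have := hstar (star a * b)
    rw [star_mul, star_star] at this
    rw [this, Complex.conj_re]
  have hexp : star (a + b) * (a + b) = star a * a + star a * b + star b * a + star b * b := by
    rw [star_add]; noncomm_ring
  have hcs := re_inner_le τ htrace hstar hpos n2 hn2 a b
  have h1 := n2_nonneg τ n2 hn2 a
  have h2 := n2_nonneg τ n2 hn2 b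
  have hsq : n2 (a + b) ^ 2 ≤ (n2 a + n2 b) ^ 2 := by
    rw [n2_sq τ hpos n2 hn2, hexp]
    simp only [map_add, Complex.add_re]
    rw [hconj]
    rw [← n2_sq τ hpos n2 hn2 a, ← n2_sq τ hpos n2 hn2 b]
    nlinarith
  have h3 := n2_nonneg τ n2 hn2 (a + b)
  nlinarith [hsq]

-- nonnegativity of τ (star b * p * b) for p in the star-positive cone
include hpos in
lemma re_conj_nonneg (b p : M)
    (hp : p ∈ AddSubmonoid.closure (Set.range fun s : M => star s * s)) :
    0 ≤ (τ (star b * p * b)).re := by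
  induction hp using AddSubmonoid.closure_induction with
  | mem x hx =>
    obtain ⟨s, rfl⟩ := hx
    have : star b * (star s * s) * b = star (s * b) * (s * b) := by
      rw [star_mul]; noncomm_ring
    rw [this]
    exact (hpos (s * b)).1
  | zero => simp
  | add x y _ _ hx hy =>
    have : star b * (x + y) * b = star b * x * b + star b * y * b := by noncomm_ring
    rw [this, map_add, Complex.add_re]
    positivity

include htrace hstar hpos in
lemma n2_mul_left (c b : M) : n2 (c * b) ≤ ‖c‖ * n2 b := by
  letI : CStarAlgebra M := ⟨⟩
  letI := CStarAlgebra.spectralOrder M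
  haveI := CStarAlgebra.spectralOrderedRing M
  have hle : star c * c ≤ algebraMap ℝ M ‖star c * c‖ :=
    IsSelfAdjoint.le_algebraMap_norm_self (IsSelfAdjoint.star_mul_self c)
  obtain ⟨p, hp, hpe⟩ := (StarOrderedRing.le_iff _ _).mp hle
  have key : (τ (star b * (star c * c) * b)).re ≤ ‖star c * c‖ * (τ (star b * b)).re := by
    have h0 := re_conj_nonneg τ hpos n2 hn2 b p hp
    have halg : star b * algebraMap ℝ M ‖star c * c‖ * b
        = ((‖star c * c‖ : ℝ) : ℂ) • (star b * b) := by
      rw [IsScalarTower.algebraMap_apply ℝ ℂ M, Algebra.algebraMap_eq_smul_one]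
      rw [mul_smul_comm, smul_mul_assoc, mul_one]
      norm_num
    have : star b * (star c * c) * b + star b * p * b
        = star b * algebraMap ℝ M ‖star c * c‖ * b := by
      rw [hpe]; noncomm_ring
    have h2 := congrArg (fun z => (τ z).re) this
    simp only [map_add, Complex.add_re, halg, map_smul, smul_eq_mul,
      Complex.re_ofReal_mul] at h2
    have := re_conj_nonneg τ hpos n2 hn2 b p hp
    linarith
  have hsq : n2 (c * b) ^ 2 ≤ ‖c‖ ^ 2 * n2 b ^ 2 := by
    rw [n2_sq τ hpos n2 hn2, n2_sq τ hpos n2 hn2,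
      show star (c * b) * (c * b) = star b * (star c * c) * b by rw [star_mul]; noncomm_ring]
    calc (τ (star b * (star c * c) * b)).re ≤ ‖star c * c‖ * (τ (star b * b)).re := key
      _ = ‖c‖ ^ 2 * (τ (star b * b)).re := by rw [CStarRing.norm_star_mul_self]; ring
  have h1 := n2_nonneg τ n2 hn2 (c * b)
  have h2 := n2_nonneg τ n2 hn2 b
  have h3 : (0:ℝ) ≤ ‖c‖ := norm_nonneg c
  nlinarith [hsq, mul_nonneg h3 h2]

include htrace hstar hpos in
lemma n2_mul_right (b c : M) : n2 (b * c) ≤ n2 b * ‖c‖ := by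
  rw [← n2_star τ htrace n2 hn2 (b * c), star_mul]
  calc n2 (star c * star b) ≤ ‖star c‖ * n2 (star b) :=
        n2_mul_left τ htrace hstar hpos n2 hn2 _ _
    _ = n2 b * ‖c‖ := by rw [norm_star, n2_star τ htrace n2 hn2]; ring

include htrace hstar hpos in
lemma n2_mul3 (a ξ b : M) : n2 (a * ξ * b) ≤ ‖a‖ * n2 ξ * ‖b‖ := by
  calc n2 (a * ξ * b) ≤ n2 (a * ξ) * ‖b‖ := n2_mul_right τ htrace hstar hpos n2 hn2 _ _
    _ ≤ ‖a‖ * n2 ξ * ‖b‖ := by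
        have := n2_mul_left τ htrace hstar hpos n2 hn2 a ξ
        have hb : (0:ℝ) ≤ ‖b‖ := norm_nonneg b
        nlinarith [this, hb]

end KapAux
end Trace


/-- Continuity estimate used in the Kaplansky-type argument: in a tracial von
Neumann algebra `(M,τ)` with `‖a‖₂ = τ(a*a)^{1/2}`, if `‖Xₙ − X‖₂ → 0` then
`‖Xₙ(1+Xₙ*Xₙ)⁻¹Xₙ* − X(1+X*X)⁻¹X*‖₂ → 0`. -/
theorem kaplansky_L2_continuity
    {M : Type*} [NormedRing M] [StarRing M] [CStarRing M] [CompleteSpace M]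
    [NormedAlgebra ℂ M] [StarModule ℂ M]
    (τ : M →ₗ[ℂ] ℂ)
    (hτ1 : τ 1 = 1)
    (htrace : ∀ x y : M, τ (x * y) = τ (y * x))
    (hstar : ∀ x : M, τ (star x) = starRingEnd ℂ (τ x))
    (hpos : ∀ a : M, 0 ≤ (τ (star a * a)).re ∧ (τ (star a * a)).im = 0)
    (n2 : M → ℝ) (hn2 : ∀ a, n2 a = Real.sqrt (τ (star a * a)).re)
    (X : ℕ → M) (X₀ : M)
    (hconv : Tendsto (fun n => n2 (X n - X₀)) atTop (nhds 0)) :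
    Tendsto
      (fun n => n2 (X n * Ring.inverse (1 + star (X n) * X n) * star (X n)
        - X₀ * Ring.inverse (1 + star X₀ * X₀) * star X₀))
      atTop (nhds 0) := by
  letI : CStarAlgebra M := ⟨⟩
  have key : ∀ n, n2 (X n * Ring.inverse (1 + star (X n) * X n) * star (X n)
      - X₀ * Ring.inverse (1 + star X₀ * X₀) * star X₀) ≤ 4 * n2 (X n - X₀) := by
    intro n
    set x := X n with hx
    set y := X₀ with hy
    rw [KapAux.ringInverse_eq x, KapAux.ringInverse_eq y]
    set un := KapAux.u x with hun
    set u0 := KapAux.u y with hu0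
    have h1 : un * (1 + star x * x) = 1 := KapAux.u_mul x
    have h2 : (1 + star y * y) * u0 = 1 := KapAux.mul_u y
    have hmid : un * (star y * y - star x * x) * u0 = un - u0 := by
      have e : un * (star y * y - star x * x) * u0
          = un * ((1 + star y * y) * u0) - un * (1 + star x * x) * u0 := by noncomm_ring
      rw [e, h2, h1, mul_one, one_mul]
    have hdecomp : x * un * star x - y * u0 * star y
        = (x * un) * (star x - star y)
          + ((x * un) * (star y - star x)) * (y * (u0 * star y))
          + ((x * un * star x) * (y - x)) * (u0 * star y)
          + (x - y) * (u0 * star y) := by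
      have e2 : ((x * un) * (star y - star x)) * (y * (u0 * star y))
          + ((x * un * star x) * (y - x)) * (u0 * star y)
          = x * (un * (star y * y - star x * x) * u0) * star y := by noncomm_ring
      rw [show (x * un) * (star x - star y)
          + ((x * un) * (star y - star x)) * (y * (u0 * star y))
          + ((x * un * star x) * (y - x)) * (u0 * star y)
          + (x - y) * (u0 * star y)
          = (x * un) * (star x - star y)
          + (((x * un) * (star y - star x)) * (y * (u0 * star y))
            + ((x * un * star x) * (y - x)) * (u0 * star y))
          + (x - y) * (u0 * star y) by abel, e2, hmid]
      noncomm_ring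
    rw [hdecomp]
    -- norm bounds
    have b1 : ‖x * un‖ ≤ 1 := KapAux.norm_mul_u_le x
    have b2 : ‖y * (u0 * star y)‖ ≤ 1 := by
      rw [← mul_assoc]; exact KapAux.norm_ava_le y
    have b3 : ‖x * un * star x‖ ≤ 1 := KapAux.norm_ava_le x
    have b4 : ‖u0 * star y‖ ≤ 1 := KapAux.norm_u_star_le y
    have hD0 : 0 ≤ n2 (x - y) := KapAux.n2_nonneg τ n2 hn2 _
    have hstxy : n2 (star x - star y) = n2 (x - y) := by
      rw [← star_sub, KapAux.n2_star τ htrace n2 hn2]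
    have hstyx : n2 (star y - star x) = n2 (x - y) := by
      rw [← star_sub, KapAux.n2_star τ htrace n2 hn2, show y - x = -(x - y) by abel,
        KapAux.n2_neg τ htrace n2 hn2]
    have hyx : n2 (y - x) = n2 (x - y) := by
      rw [show y - x = -(x - y) by abel, KapAux.n2_neg τ htrace n2 hn2]
    have t1 : n2 ((x * un) * (star x - star y)) ≤ n2 (x - y) := by
      have := KapAux.n2_mul_left τ htrace hstar hpos n2 hn2 (x * un) (star x - star y)
      have h0 := KapAux.n2_nonneg τ n2 hn2 (star x - star y)
      rw [hstxy] at this h0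
      nlinarith
    have t2 : n2 (((x * un) * (star y - star x)) * (y * (u0 * star y))) ≤ n2 (x - y) := by
      have := KapAux.n2_mul3 τ htrace hstar hpos n2 hn2 (x * un) (star y - star x)
        (y * (u0 * star y))
      have h0 := KapAux.n2_nonneg τ n2 hn2 (star y - star x)
      rw [hstyx] at this h0
      have hb : (0:ℝ) ≤ ‖y * (u0 * star y)‖ := norm_nonneg _
      have ha : (0:ℝ) ≤ ‖x * un‖ := norm_nonneg _
      nlinarith [mul_nonneg (sub_nonneg.mpr b1) h0,
        mul_nonneg (mul_nonneg ha h0) (sub_nonneg.mpr b2)]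
    have t3 : n2 (((x * un * star x) * (y - x)) * (u0 * star y)) ≤ n2 (x - y) := by
      have := KapAux.n2_mul3 τ htrace hstar hpos n2 hn2 (x * un * star x) (y - x) (u0 * star y)
      have h0 := KapAux.n2_nonneg τ n2 hn2 (y - x)
      rw [hyx] at this h0
      have hb : (0:ℝ) ≤ ‖u0 * star y‖ := norm_nonneg _
      have ha : (0:ℝ) ≤ ‖x * un * star x‖ := norm_nonneg _
      nlinarith [mul_nonneg (sub_nonneg.mpr b3) h0,
        mul_nonneg (mul_nonneg ha h0) (sub_nonneg.mpr b4)]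
    have t4 : n2 ((x - y) * (u0 * star y)) ≤ n2 (x - y) := by
      have := KapAux.n2_mul_right τ htrace hstar hpos n2 hn2 (x - y) (u0 * star y)
      nlinarith
    calc n2 _ ≤ n2 ((x * un) * (star x - star y)
            + ((x * un) * (star y - star x)) * (y * (u0 * star y))
            + ((x * un * star x) * (y - x)) * (u0 * star y))
          + n2 ((x - y) * (u0 * star y)) := KapAux.n2_add_le τ htrace hstar hpos n2 hn2 _ _
      _ ≤ (n2 ((x * un) * (star x - star y)
            + ((x * un) * (star y - star x)) * (y * (u0 * star y)))
          + n2 (((x * un * star x) * (y - x)) * (u0 * star y)))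
          + n2 ((x - y) * (u0 * star y)) := by
            have := KapAux.n2_add_le τ htrace hstar hpos n2 hn2
              ((x * un) * (star x - star y)
                + ((x * un) * (star y - star x)) * (y * (u0 * star y)))
              (((x * un * star x) * (y - x)) * (u0 * star y))
            linarith
      _ ≤ ((n2 ((x * un) * (star x - star y))
            + n2 (((x * un) * (star y - star x)) * (y * (u0 * star y))))
          + n2 (((x * un * star x) * (y - x)) * (u0 * star y)))
          + n2 ((x - y) * (u0 * star y)) := by
            have := KapAux.n2_add_le τ htrace hstar hpos n2 hn2
              ((x * un) * (star x - star y))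
              (((x * un) * (star y - star x)) * (y * (u0 * star y)))
            linarith
      _ ≤ 4 * n2 (x - y) := by linarith
  have hnn : ∀ n, 0 ≤ n2 (X n * Ring.inverse (1 + star (X n) * X n) * star (X n)
      - X₀ * Ring.inverse (1 + star X₀ * X₀) * star X₀) := fun n =>
    KapAux.n2_nonneg τ n2 hn2 _
  have hlim : Tendsto (fun n => 4 * n2 (X n - X₀)) atTop (nhds 0) := by
    have := hconv.const_mul (4:ℝ)
    simpa using this
  exact squeeze_zero hnn key hlim
end
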